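/- Under the stated hypotheses, with λ ∈ (0, 2α) and {α_n} ⊂ [0,1] satisfying limsup_{n→∞} α_n < 1, the sequence {x_n} generated by: x_0 ∈ H; z_n = P_C x_n; u_n^k = P_C(z_n - λ A_k z_n) (k = 1,…,M); k_n attaining max{‖u_n^k - x_n‖ : k = 1,…,M} and ū_n = u_n^{k_n}; y_n^i = α_n ū_n + (1-α_n) S_i ū_n (i = 1,…,N); i_n attaining max{‖y_n^i - x_n‖ : i = 1,…,N} and ȳ_n = y_n^{i_n}; C_n = {v ∈ H : ‖v - ȳ_n‖ ≤ ‖v - x_n‖}; Q_n = {v ∈ H : ⟨x_0 - x_n, x_n - v⟩ ≥ 0}; x_{n+1} = P_{C_n ∩ Q_n} x_0, converges strongly to P_F x_0. -/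

import Mathlib

open Filter Topology
open scoped RealInnerProductSpace

/-- `p` is the metric projection of `x` onto the set `D`:
it belongs to `D` and minimizes the distance to `x` over `D`. -/
def IsMetricProj {H : Type*} [NormedAddCommGroup H] [InnerProductSpace ℝ H]
    (D : Set H) (x p : H) : Prop :=
  p ∈ D ∧ ∀ w ∈ D, ‖p - x‖ ≤ ‖w - x‖

section Aux
variable {H : Type*} [NormedAddCommGroup H] [InnerProductSpace ℝ H]

lemma norm_le_of_sq_le' {a b : H} (h : ‖a‖^2 ≤ ‖b‖^2) : ‖a‖ ≤ ‖b‖ := by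
  nlinarith [norm_nonneg a, norm_nonneg b]

lemma IsMetricProj.inner_le {D : Set H} (hD : Convex ℝ D) {u q : H}
    (h : IsMetricProj D u q) : ∀ w ∈ D, ⟪u - q, w - q⟫ ≤ 0 := by
  have hq : q ∈ D := h.1
  have : Nonempty D := ⟨⟨q, hq⟩⟩
  have heq : ‖u - q‖ = ⨅ w : D, ‖u - w‖ := by
    refine le_antisymm (le_ciInf fun w => ?_) ?_
    · rw [norm_sub_rev u q, norm_sub_rev u (w : H)]
      exact h.2 w w.2
    · exact ciInf_le ⟨0, fun b ⟨w, hw⟩ => hw ▸ norm_nonneg _⟩ (⟨q, hq⟩ : D)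
  exact (norm_eq_iInf_iff_real_inner_le_zero hD hq).mp heq

lemma isMetricProj_of_inner {D : Set H} {u q : H} (hq : q ∈ D)
    (h : ∀ w ∈ D, ⟪u - q, w - q⟫ ≤ 0) : IsMetricProj D u q := by
  refine ⟨hq, fun w hw => ?_⟩
  have h1 := h w hw
  have expand : ‖w - u‖^2 = ‖q - u‖^2 + 2*⟪q - u, w - q⟫ + ‖w - q‖^2 := by
    have : w - u = (q - u) + (w - q) := by abel
    rw [this, @norm_add_sq_real]
  have h2 : ⟪q - u, w - q⟫ = -⟪u - q, w - q⟫ := by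
    rw [← inner_neg_left]; congr 1; abel
  apply norm_le_of_sq_le'
  nlinarith [sq_nonneg ‖w - q‖]

lemma proj_firm {D : Set H} (hD : Convex ℝ D) {u v q s : H}
    (hq : IsMetricProj D u q) (hs : IsMetricProj D v s) :
    ‖q - s‖^2 ≤ ⟪u - v, q - s⟫ := by
  have h1 := hq.inner_le hD s hs.1
  have h2 := hs.inner_le hD q hq.1
  have e1 : ⟪u - q, s - q⟫ + ⟪v - s, q - s⟫ =
      ⟪u - v, s - q⟫ + ⟪q - s, q - s⟫ := by
    simp only [inner_sub_left, inner_sub_right]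
    have c1 := real_inner_comm q s
    linarith [real_inner_comm u s, real_inner_comm v q]
  have e2 : ⟪q - s, q - s⟫ = ‖q - s‖^2 := real_inner_self_eq_norm_sq _
  have e3 : ⟪u - v, s - q⟫ = -⟪u - v, q - s⟫ := by
    rw [← inner_neg_right]; congr 1; abel
  linarith

lemma proj_firm' {D : Set H} (hD : Convex ℝ D) {u v q s : H}
    (hq : IsMetricProj D u q) (hs : IsMetricProj D v s) :
    ‖q - s‖^2 ≤ ‖u - v‖^2 - ‖(u - v) - (q - s)‖^2 := by
  have h := proj_firm hD hq hs
  have expand : ‖(u - v) - (q - s)‖^2 = ‖u - v‖^2 - 2*⟪u - v, q - s⟫ + ‖q - s‖^2 := by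
    rw [@norm_sub_sq_real]
  linarith

lemma proj_nonexp {D : Set H} (hD : Convex ℝ D) {u v q s : H}
    (hq : IsMetricProj D u q) (hs : IsMetricProj D v s) :
    ‖q - s‖ ≤ ‖u - v‖ := by
  have h := proj_firm' hD hq hs
  apply norm_le_of_sq_le'
  nlinarith [sq_nonneg ‖(u - v) - (q - s)‖]

lemma proj_unique {D : Set H} (hD : Convex ℝ D) {u q s : H}
    (hq : IsMetricProj D u q) (hs : IsMetricProj D u s) : q = s := by
  have h := proj_firm hD hq hs
  simp only [sub_self, inner_zero_left] at h
  have : ‖q - s‖ = 0 := by nlinarith [norm_nonneg (q - s)]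
  rwa [norm_sub_eq_zero_iff] at this

lemma proj_exists {D : Set H} [CompleteSpace H] (hne : D.Nonempty) (hcl : IsClosed D)
    (hD : Convex ℝ D) (u : H) : ∃ q, IsMetricProj D u q := by
  have : Nonempty D := hne.to_subtype
  obtain ⟨v, hv, hmin⟩ := exists_norm_eq_iInf_of_complete_convex hne hcl.isComplete hD u
  refine ⟨v, hv, fun w hw => ?_⟩
  rw [norm_sub_rev v u, norm_sub_rev w u, hmin]
  exact ciInf_le ⟨0, fun b ⟨w', hw'⟩ => hw' ▸ norm_nonneg _⟩ (⟨w, hw⟩ : D)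

end Aux
section Aux2
variable {H : Type*} [NormedAddCommGroup H] [InnerProductSpace ℝ H]

lemma norm_le_of_sq_le'' {a b : H} (h : ‖a‖^2 ≤ ‖b‖^2) : ‖a‖ ≤ ‖b‖ := by
  nlinarith [norm_nonneg a, norm_nonneg b]

lemma ism_contract {d e : H} {al lam : ℝ} (hl : 0 < lam)
    (h : al * ‖e‖^2 ≤ ⟪e, d⟫) :
    ‖d - lam • e‖^2 ≤ ‖d‖^2 - lam*(2*al - lam)*‖e‖^2 := by
  have expand : ‖d - lam • e‖^2 = ‖d‖^2 - 2*(lam*⟪e, d⟫) + lam^2*‖e‖^2 := by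
    rw [@norm_sub_sq_real, real_inner_smul_right, norm_smul, real_inner_comm]
    simp [mul_pow, abs_mul_abs_self, sq_abs]
  nlinarith [mul_le_mul_of_nonneg_left h (le_of_lt hl)]

lemma tendsto_zero_of_sq_le {g h : ℕ → ℝ} (hg : ∀ n, 0 ≤ g n)
    (hle : ∀ n, g n ^ 2 ≤ h n) (hh : Tendsto h atTop (𝓝 0)) :
    Tendsto g atTop (𝓝 0) := by
  have h1 : ∀ n, g n ≤ Real.sqrt (h n) := fun n => by
    have := Real.sqrt_le_sqrt (hle n)
    rwa [Real.sqrt_sq (hg n)] at this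
  have h2 : Tendsto (fun n => Real.sqrt (h n)) atTop (𝓝 0) := by
    have := (Real.continuous_sqrt.tendsto 0).comp hh
    simpa [Function.comp_def, Real.sqrt_zero] using this
  exact squeeze_zero hg h1 h2

lemma ult_bdd_lim (F' : Ultrafilter ℕ) {f : ℕ → ℝ} {c : ℝ} (h : ∀ n, |f n| ≤ c) :
    ∃ aa, Tendsto f (F' : Filter ℕ) (𝓝 aa) := by
  obtain ⟨aa, -, haa⟩ := (isCompact_Icc (a := -c) (b := c)).ultrafilter_le_nhds
    (F'.map f) (by
      rw [Ultrafilter.coe_map, Filter.le_principal_iff, Filter.mem_map]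
      exact Filter.univ_mem' fun n => abs_le.mp (h n))
  exact ⟨aa, by rwa [Ultrafilter.coe_map] at haa⟩

lemma qkey {x0 xn v : H} (h : 0 ≤ ⟪x0 - xn, xn - v⟫) :
    ‖v - xn‖^2 + ‖xn - x0‖^2 ≤ ‖v - x0‖^2 := by
  have expand : ‖v - x0‖^2 = ‖v - xn‖^2 + 2*⟪v - xn, xn - x0⟫ + ‖xn - x0‖^2 := by
    have e : v - x0 = (v - xn) + (xn - x0) := by abel
    rw [e, @norm_add_sq_real]
  have e2 : ⟪v - xn, xn - x0⟫ = ⟪x0 - xn, xn - v⟫ := by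
    rw [show v - xn = -(xn - v) by abel, show xn - x0 = -(x0 - xn) by abel,
      inner_neg_neg, real_inner_comm]
  linarith

lemma dist_le_iff' (v b c : H) : ‖v - b‖ ≤ ‖v - c‖ ↔ 2*⟪v, c - b⟫ ≤ ‖c‖^2 - ‖b‖^2 := by
  have e1 : ‖v - b‖^2 = ‖v‖^2 - 2*⟪v, b⟫ + ‖b‖^2 := by rw [@norm_sub_sq_real]
  have e2 : ‖v - c‖^2 = ‖v‖^2 - 2*⟪v, c⟫ + ‖c‖^2 := by rw [@norm_sub_sq_real]
  have e3 : ⟪v, c - b⟫ = ⟪v, c⟫ - ⟪v, b⟫ := inner_sub_right v c b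
  constructor
  · intro h
    have := pow_le_pow_left₀ (norm_nonneg (v - b)) h 2
    linarith
  · intro h
    apply norm_le_of_sq_le''
    linarith

lemma convex_distle (b c : H) : Convex ℝ {v : H | ‖v - b‖ ≤ ‖v - c‖} := by
  intro v hv w hw t s ht hs hts
  simp only [Set.mem_setOf_eq, dist_le_iff'] at hv hw ⊢
  have e : ⟪t•v + s•w, c - b⟫ = t*⟪v, c - b⟫ + s*⟪w, c - b⟫ := by
    rw [inner_add_left, real_inner_smul_left, real_inner_smul_left]
  nlinarith [mul_le_mul_of_nonneg_left hv ht, mul_le_mul_of_nonneg_left hw hs]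

lemma convex_qset (u xn : H) : Convex ℝ {v : H | 0 ≤ ⟪u, xn - v⟫} := by
  intro v hv w hw t s ht hs hts
  simp only [Set.mem_setOf_eq] at hv hw ⊢
  have e : ⟪u, xn - (t•v + s•w)⟫ = t*⟪u, xn - v⟫ + s*⟪u, xn - w⟫ := by
    have : xn - (t•v + s•w) = t•(xn - v) + s•(xn - w) := by
      rw [smul_sub, smul_sub, ← add_sub_assoc]
      rw [show t•xn - t•v + s•xn = (t•xn + s•xn) - t•v by abel, ← add_smul, hts, one_smul]
      abel
    rw [this, inner_add_right, real_inner_smul_right, real_inner_smul_right]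
  rw [e]
  exact add_nonneg (mul_nonneg ht hv) (mul_nonneg hs hw)

end Aux2

lemma zu_bound {H : Type*} [NormedAddCommGroup H] [InnerProductSpace ℝ H]
    {zn un pp Az Ap : H} {lam al : ℝ} (hl : 0 < lam) (hal : lam < 2*al)
    (hfirm : ‖un - pp‖^2 ≤ ‖(zn - lam•Az) - (pp - lam•Ap)‖^2
      - ‖((zn - lam•Az) - (pp - lam•Ap)) - (un - pp)‖^2)
    (h2 : ‖(zn - lam•Az) - (pp - lam•Ap)‖^2 ≤ ‖zn - pp‖^2 - lam*(2*al - lam)*‖Az - Ap‖^2) :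
    ‖zn - un‖^2 ≤ (2 + 2*lam^2/(lam*(2*al-lam))) * (‖zn - pp‖^2 - ‖un - pp‖^2) := by
  have hκ : 0 < lam*(2*al - lam) := mul_pos hl (by linarith)
  set G : H := ((zn - lam•Az) - (pp - lam•Ap)) - (un - pp) with hG
  set e : ℝ := ‖Az - Ap‖ with he
  set D : ℝ := ‖zn - pp‖^2 - ‖un - pp‖^2 with hD
  have he0 : 0 ≤ e := norm_nonneg _
  have hG0 : 0 ≤ ‖G‖ := norm_nonneg _
  have hg2 : ‖G‖^2 + lam*(2*al - lam)*e^2 ≤ D := by rw [hD]; linarith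
  have hze : zn - un = G + lam • (Az - Ap) := by rw [hG, smul_sub]; abel
  have htri : ‖zn - un‖ ≤ ‖G‖ + lam * e := by
    rw [hze]
    refine le_trans (norm_add_le _ _) ?_
    rw [norm_smul, Real.norm_eq_abs, abs_of_nonneg hl.le, he]
  have hsq : ‖zn - un‖^2 ≤ 2*‖G‖^2 + 2*(lam*e)^2 := by
    nlinarith [sq_nonneg (‖G‖ - lam*e), norm_nonneg (zn - un)]
  have hke : 0 ≤ lam*(2*al - lam)*e^2 := mul_nonneg hκ.le (sq_nonneg e)
  have h5 : lam*(2*al - lam) * e^2 ≤ D := by nlinarith [sq_nonneg ‖G‖]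
  have h6 : 2*lam^2*e^2 ≤ 2*lam^2/(lam*(2*al - lam)) * D := by
    rw [div_mul_eq_mul_div, le_div_iff₀ hκ]
    nlinarith [mul_le_mul_of_nonneg_left h5 (by positivity : (0:ℝ) ≤ 2*lam^2)]
  have h7 : 2*‖G‖^2 ≤ 2*D := by nlinarith
  have hexp : (2 + 2*lam^2/(lam*(2*al-lam))) * D
      = 2*D + 2*lam^2/(lam*(2*al-lam)) * D := by ring
  rw [hexp]
  nlinarith


section Ultra
variable {H : Type*} [NormedAddCommGroup H] [InnerProductSpace ℝ H]

lemma ultra_weak_limit [CompleteSpace H] (ub : ℕ → H) (B : ℝ) (hB : ∀ n, ‖ub n‖ ≤ B) :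
    ∃ (F' : Ultrafilter ℕ) (w : H) (A0 : ℝ), (F' : Filter ℕ) ≤ atTop ∧
      (∀ v : H, Tendsto (fun n => ⟪ub n, v⟫) (F' : Filter ℕ) (𝓝 ⟪w, v⟫)) ∧
      (∀ v : H, Tendsto (fun n => ‖ub n - v‖^2) (F' : Filter ℕ)
        (𝓝 (A0 - 2*⟪w, v⟫ + ‖v‖^2))) := by
  have hBnn : 0 ≤ B := le_trans (norm_nonneg _) (hB 0)
  refine ⟨Ultrafilter.of atTop, ?_⟩
  set F' : Ultrafilter ℕ := Ultrafilter.of atTop with hF'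
  have hbd : ∀ v : H, ∀ n, |⟪ub n, v⟫| ≤ B * ‖v‖ := fun v n =>
    le_trans (abs_real_inner_le_norm _ _) (mul_le_mul_of_nonneg_right (hB n) (norm_nonneg v))
  have hLex : ∀ v : H, ∃ aa, Tendsto (fun n => ⟪ub n, v⟫) (F' : Filter ℕ) (𝓝 aa) :=
    fun v => ult_bdd_lim F' (hbd v)
  choose L hL using hLex
  have Ladd : ∀ v w', L (v + w') = L v + L w' := by
    intro v w'
    refine tendsto_nhds_unique (hL (v + w')) ?_
    have h1 := (hL v).add (hL w')
    simpa [inner_add_right] using h1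
  have Lsmul : ∀ (c : ℝ) (v : H), L (c • v) = c * L v := by
    intro c v
    refine tendsto_nhds_unique (hL (c • v)) ?_
    have h1 := (hL v).const_mul c
    simpa [inner_smul_right] using h1
  have Lbd : ∀ v, |L v| ≤ B * ‖v‖ := fun v =>
    le_of_tendsto (hL v).abs (Filter.Eventually.of_forall (hbd v))
  obtain ⟨A0, hA0⟩ := ult_bdd_lim F' (f := fun n => ‖ub n‖^2) (c := B^2) (fun n => by
    rw [abs_of_nonneg (sq_nonneg _)]
    exact pow_le_pow_left₀ (norm_nonneg _) (hB n) 2)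
  set Lmap : H →ₗ[ℝ] ℝ :=
    { toFun := L, map_add' := Ladd, map_smul' := Lsmul } with hLmap
  set Lclm : H →L[ℝ] ℝ := LinearMap.mkContinuous Lmap B (fun v => by
    simpa [hLmap, Real.norm_eq_abs] using Lbd v) with hLclm
  set w : H := (InnerProductSpace.toDual ℝ H).symm Lclm with hwdef
  have hwv : ∀ v, ⟪w, v⟫ = L v := by
    intro v
    rw [hwdef]
    exact InnerProductSpace.toDual_symm_apply
  refine ⟨w, A0, Ultrafilter.of_le _, fun v => by rw [hwv v]; exact hL v, ?_⟩
  intro v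
  have h1 : Tendsto (fun n => ‖ub n‖^2 - 2*⟪ub n, v⟫ + ‖v‖^2) (F' : Filter ℕ)
      (𝓝 (A0 - 2*(L v) + ‖v‖^2)) := (hA0.sub ((hL v).const_mul 2)).add_const _
  rw [← hwv v] at h1
  refine h1.congr fun n => ?_
  rw [@norm_sub_sq_real]

lemma mem_of_ultra [CompleteSpace H] (C : Set H) (hCne : C.Nonempty) (hCcl : IsClosed C)
    (hCcv : Convex ℝ C) (ub : ℕ → H) (hubC : ∀ n, ub n ∈ C)
    (F' : Ultrafilter ℕ) (w : H)
    (hinner : ∀ v : H, Tendsto (fun n => ⟪ub n, v⟫) (F' : Filter ℕ) (𝓝 ⟪w, v⟫)) :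
    w ∈ C := by
  obtain ⟨w', hw'⟩ := proj_exists hCne hCcl hCcv w
  have hvar : ∀ n, ⟪w - w', ub n - w'⟫ ≤ 0 := fun n => hw'.inner_le hCcv _ (hubC n)
  have hval : ⟪w, w - w'⟫ - ⟪w - w', w'⟫ = ‖w - w'‖^2 := by
    rw [← real_inner_self_eq_norm_sq]
    simp only [inner_sub_left, inner_sub_right]
    linarith [real_inner_comm w w']
  have hlim : Tendsto (fun n => ⟪w - w', ub n - w'⟫) (F' : Filter ℕ) (𝓝 (‖w - w'‖^2)) := by
    have h1 : Tendsto (fun n => ⟪ub n, w - w'⟫ - ⟪w - w', w'⟫) (F' : Filter ℕ)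
        (𝓝 (⟪w, w - w'⟫ - ⟪w - w', w'⟫)) := (hinner _).sub_const _
    rw [hval] at h1
    refine h1.congr fun n => ?_
    simp only [inner_sub_left, inner_sub_right]
    linarith [real_inner_comm (ub n) w, real_inner_comm (ub n) w']
  have hle0 : ‖w - w'‖^2 ≤ 0 := le_of_tendsto hlim (Filter.Eventually.of_forall hvar)
  have h0 : ‖w - w'‖ = 0 :=
    le_antisymm (by nlinarith [norm_nonneg (w - w')]) (norm_nonneg _)
  rw [norm_sub_eq_zero_iff] at h0
  rw [h0]; exact hw'.1

lemma fixed_of_ultra (C : Set H) (ub : ℕ → H) (hubC : ∀ n, ub n ∈ C)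
    (F' : Ultrafilter ℕ) (hle : (F' : Filter ℕ) ≤ atTop) (w : H) (A0 : ℝ)
    (hψ : ∀ v : H, Tendsto (fun n => ‖ub n - v‖^2) (F' : Filter ℕ)
      (𝓝 (A0 - 2*⟪w, v⟫ + ‖v‖^2)))
    (hwC : w ∈ C) (B' : ℝ) (hub : ∀ n, ‖ub n - w‖ ≤ B')
    (T : H → H) (hTC : ∀ v ∈ C, T v ∈ C)
    (hTne : ∀ v ∈ C, ∀ v' ∈ C, ‖T v - T v'‖ ≤ ‖v - v'‖)
    (hd : Tendsto (fun n => ‖ub n - T (ub n)‖) atTop (𝓝 0)) : T w = w := by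
  have key : ∀ n, ‖ub n - T w‖^2 ≤ ‖ub n - w‖^2
      + ‖ub n - T (ub n)‖ * (2*B' + ‖ub n - T (ub n)‖) := by
    intro n
    have t1 : ‖ub n - T w‖ ≤ ‖ub n - T (ub n)‖ + ‖T (ub n) - T w‖ :=
      norm_sub_le_norm_sub_add_norm_sub _ _ _
    have t2 : ‖T (ub n) - T w‖ ≤ ‖ub n - w‖ := hTne _ (hubC n) w hwC
    have t3 : ‖ub n - w‖ ≤ B' := hub n
    have t4 : (0:ℝ) ≤ ‖ub n - T (ub n)‖ := norm_nonneg _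
    nlinarith [norm_nonneg (ub n - T w)]
  have hεF : Tendsto (fun n => ‖ub n - T (ub n)‖) (F' : Filter ℕ) (𝓝 0) := hd.mono_left hle
  have hRHS : Tendsto (fun n => ‖ub n - w‖^2 + ‖ub n - T (ub n)‖ * (2*B' + ‖ub n - T (ub n)‖))
      (F' : Filter ℕ) (𝓝 ((A0 - 2*⟪w, w⟫ + ‖w‖^2) + 0 * (2*B' + 0))) :=
    (hψ w).add (hεF.mul (tendsto_const_nhds.add hεF))
  have hle2 := le_of_tendsto_of_tendsto' (hψ (T w)) hRHS key
  have h3 : ‖T w - w‖^2 ≤ 0 := by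
    rw [@norm_sub_sq_real]
    have h4 := real_inner_self_eq_norm_sq w
    have h5 := real_inner_comm w (T w)
    nlinarith
  have h0 : ‖T w - w‖ = 0 :=
    le_antisymm (by nlinarith [norm_nonneg (T w - w)]) (norm_nonneg _)
  rwa [norm_sub_eq_zero_iff] at h0

lemma normbound_of_ultra (ub : ℕ → H) (F' : Ultrafilter ℕ) (hle : (F' : Filter ℕ) ≤ atTop)
    (w x0 : H)
    (hinner : ∀ v : H, Tendsto (fun n => ⟪ub n, v⟫) (F' : Filter ℕ) (𝓝 ⟪w, v⟫))
    (rr : ℝ) (hrr0 : 0 ≤ rr)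
    (hev : ∀ ε, 0 < ε → ∀ᶠ n in atTop, ‖ub n - x0‖ ≤ rr + ε) :
    ‖w - x0‖ ≤ rr := by
  have hval : ⟪w, w - x0⟫ - ⟪w - x0, x0⟫ = ‖w - x0‖^2 := by
    rw [← real_inner_self_eq_norm_sq]
    simp only [inner_sub_left, inner_sub_right]
    linarith [real_inner_comm w x0]
  have hlim : Tendsto (fun n => ⟪w - x0, ub n - x0⟫) (F' : Filter ℕ) (𝓝 (‖w - x0‖^2)) := by
    have h1 : Tendsto (fun n => ⟪ub n, w - x0⟫ - ⟪w - x0, x0⟫) (F' : Filter ℕ)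
        (𝓝 (⟪w, w - x0⟫ - ⟪w - x0, x0⟫)) := (hinner _).sub_const _
    rw [hval] at h1
    refine h1.congr fun n => ?_
    simp only [inner_sub_left, inner_sub_right]
    linarith [real_inner_comm (ub n) w, real_inner_comm (ub n) x0]
  have key : ∀ ε, 0 < ε → ‖w - x0‖^2 ≤ ‖w - x0‖ * (rr + ε) := by
    intro ε hε
    refine le_of_tendsto hlim ?_
    filter_upwards [(hev ε hε).filter_mono hle] with n hn
    exact le_trans (real_inner_le_norm _ _) (mul_le_mul_of_nonneg_left hn (norm_nonneg _))
  rcases eq_or_lt_of_le (norm_nonneg (w - x0)) with h0 | h0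
  · rw [← h0]; exact hrr0
  · by_contra hcon
    push_neg at hcon
    have hk := key ((‖w - x0‖ - rr)/2) (by linarith)
    nlinarith

end Ultra

theorem parallel_hybrid_modified_convergence
    {H : Type*} [NormedAddCommGroup H] [InnerProductSpace ℝ H] [CompleteSpace H]
    -- `C` is a nonempty closed convex subset of `H`
    (C : Set H) (hCne : C.Nonempty) (hCcl : IsClosed C) (hCcv : Convex ℝ C)
    (M N : ℕ)
    -- the mappings `A_k : C → H` are `α`-inverse strongly monotone
    (α : ℝ) (hα : 0 < α) (A : Fin M → H → H)
    (hA : ∀ k, ∀ p ∈ C, ∀ q ∈ C, α * ‖A k p - A k q‖ ^ 2 ≤ ⟪A k p - A k q, p - q⟫)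
    -- the mappings `S_i : C → C` are nonexpansive
    (S : Fin N → H → H) (hSmap : ∀ i, ∀ p ∈ C, S i p ∈ C)
    (hS : ∀ i, ∀ p ∈ C, ∀ q ∈ C, ‖S i p - S i q‖ ≤ ‖p - q‖)
    -- parameters: `λ ∈ (0, 2α)`, `{α_n} ⊂ [0,1]` with `limsup α_n < 1`
    (lam : ℝ) (hlam : lam ∈ Set.Ioo 0 (2 * α))
    (a : ℕ → ℝ) (ha : ∀ n, a n ∈ Set.Icc (0 : ℝ) 1)
    (ha' : Filter.limsup a Filter.atTop < 1)
    -- `F = (∩ F(S_i)) ∩ (∩ VI(A_k, C))` is nonempty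
    (F : Set H)
    (hF : F = {p | p ∈ C ∧ (∀ i, S i p = p) ∧ (∀ k, ∀ q ∈ C, 0 ≤ ⟪A k p, q - p⟫)})
    (hFne : F.Nonempty)
    -- the algorithm
    (x : ℕ → H) (z : ℕ → H) (uu : ℕ → Fin M → H) (y : ℕ → Fin N → H)
    (kn : ℕ → Fin M) (inn : ℕ → Fin N)
    (Cn Qn : ℕ → Set H)
    -- `z_n = P_C x_n`
    (hz : ∀ n, IsMetricProj C (x n) (z n))
    -- `u_n^k = P_C(z_n - λ A_k z_n)`
    (hu : ∀ n k, IsMetricProj C (z n - lam • A k (z n)) (uu n k))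
    -- `k_n` attains `max{‖u_n^k - x_n‖}`, `ū_n = u_n^{k_n}`
    (hkn : ∀ n k, ‖uu n k - x n‖ ≤ ‖uu n (kn n) - x n‖)
    -- `y_n^i = α_n ū_n + (1 - α_n) S_i ū_n`
    (hy : ∀ n i, y n i = a n • uu n (kn n) + (1 - a n) • S i (uu n (kn n)))
    -- `i_n` attains `max{‖y_n^i - x_n‖}`, `ȳ_n = y_n^{i_n}`
    (hin : ∀ n i, ‖y n i - x n‖ ≤ ‖y n (inn n) - x n‖)
    -- `C_n = {v : ‖v - ȳ_n‖ ≤ ‖v - x_n‖}`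
    (hCn : ∀ n, Cn n = {v | ‖v - y n (inn n)‖ ≤ ‖v - x n‖})
    -- `Q_n = {v : ⟨x_0 - x_n, x_n - v⟩ ≥ 0}`
    (hQn : ∀ n, Qn n = {v | 0 ≤ ⟪x 0 - x n, x n - v⟫})
    -- `x_{n+1} = P_{C_n ∩ Q_n} x_0`
    (hx : ∀ n, IsMetricProj (Cn n ∩ Qn n) (x 0) (x (n + 1)))
    -- `P_F x_0`
    (p : H) (hp : IsMetricProj F (x 0) p) :
    Filter.Tendsto x Filter.atTop (nhds p) := by
  obtain ⟨hlam0, hlam2⟩ := hlam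
  have hκ : 0 < lam * (2*α - lam) := mul_pos hlam0 (by linarith)
  have Fmem : ∀ w, w ∈ F ↔ (w ∈ C ∧ (∀ i, S i w = w) ∧ ∀ k, ∀ q ∈ C, 0 ≤ ⟪A k w, q - w⟫) := by
    intro w; rw [hF]; exact Iff.rfl
  have hpF : p ∈ F := hp.1
  have zC : ∀ n, z n ∈ C := fun n => (hz n).1
  have uC : ∀ n k, uu n k ∈ C := fun n k => (hu n k).1
  -- trivial projections at points of F
  have wprojC : ∀ w ∈ F, IsMetricProj C w w := by
    intro w hw
    exact ⟨((Fmem w).mp hw).1, fun q hq => by simp⟩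
  have wprojA : ∀ w ∈ F, ∀ k, IsMetricProj C (w - lam • A k w) w := by
    intro w hw k
    obtain ⟨hwC, -, hVI⟩ := (Fmem w).mp hw
    apply isMetricProj_of_inner hwC
    intro q hq
    rw [show w - lam • A k w - w = -(lam • A k w) by abel, inner_neg_left,
      real_inner_smul_left]
    have h0 := hVI k q hq
    nlinarith
  -- the nonexpansiveness of v ↦ v - lam • A k v on C
  have ismkey : ∀ (k : Fin M), ∀ v ∈ C, ∀ v' ∈ C,
      ‖(v - lam • A k v) - (v' - lam • A k v')‖^2
        ≤ ‖v - v'‖^2 - lam*(2*α - lam)*‖A k v - A k v'‖^2 := by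
    intro k v hv v' hv'
    rw [show (v - lam • A k v) - (v' - lam • A k v') = (v - v') - lam • (A k v - A k v')
      by rw [smul_sub]; abel]
    exact ism_contract hlam0 (hA k v hv v' hv')
  have ismne : ∀ (k : Fin M), ∀ v ∈ C, ∀ v' ∈ C,
      ‖(v - lam • A k v) - (v' - lam • A k v')‖ ≤ ‖v - v'‖ := by
    intro k v hv v' hv'
    apply norm_le_of_sq_le'
    nlinarith [ismkey k v hv v' hv', sq_nonneg ‖A k v - A k v'‖]
  -- Fejér chain
  have chain1 : ∀ w ∈ F, ∀ n, ‖z n - w‖ ≤ ‖x n - w‖ := fun w hw n =>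
    proj_nonexp hCcv (hz n) (wprojC w hw)
  have chain2 : ∀ w ∈ F, ∀ n k, ‖uu n k - w‖ ≤ ‖z n - w‖ := by
    intro w hw n k
    have h1 : ‖uu n k - w‖ ≤ ‖(z n - lam • A k (z n)) - (w - lam • A k w)‖ :=
      proj_nonexp hCcv (hu n k) (wprojA w hw k)
    exact le_trans h1 (ismne k (z n) (zC n) w ((Fmem w).mp hw).1)
  have chain3 : ∀ w ∈ F, ∀ n i, ‖y n i - w‖ ≤ ‖uu n (kn n) - w‖ := by
    intro w hw n i
    obtain ⟨hwC, hwS, -⟩ := (Fmem w).mp hw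
    have e : y n i - w = a n • (uu n (kn n) - w)
        + (1 - a n) • (S i (uu n (kn n)) - w) := by
      rw [hy n i]; module
    have hSn : ‖S i (uu n (kn n)) - w‖ ≤ ‖uu n (kn n) - w‖ := by
      conv_lhs => rw [← hwS i]
      exact hS i _ (uC n (kn n)) w hwC
    obtain ⟨ha0, ha1⟩ := ha n
    calc ‖y n i - w‖ ≤ ‖a n • (uu n (kn n) - w)‖ + ‖(1 - a n) • (S i (uu n (kn n)) - w)‖ := by
          rw [e]; exact norm_add_le _ _
      _ = a n * ‖uu n (kn n) - w‖ + (1 - a n) * ‖S i (uu n (kn n)) - w‖ := by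
          rw [norm_smul, norm_smul, Real.norm_eq_abs, Real.norm_eq_abs,
            abs_of_nonneg ha0, abs_of_nonneg (by linarith : (0:ℝ) ≤ 1 - a n)]
      _ ≤ ‖uu n (kn n) - w‖ := by nlinarith [norm_nonneg (uu n (kn n) - w)]
  have FCn : ∀ w ∈ F, ∀ n, w ∈ Cn n := by
    intro w hw n
    rw [hCn n]
    show ‖w - y n (inn n)‖ ≤ ‖w - x n‖
    rw [norm_sub_rev w, norm_sub_rev w]
    exact le_trans (chain3 w hw n (inn n))
      (le_trans (chain2 w hw n (kn n)) (chain1 w hw n))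
  have QnConv : ∀ n, Convex ℝ (Qn n) := fun n => by rw [hQn n]; exact convex_qset _ _
  have CnConv : ∀ n, Convex ℝ (Cn n) := fun n => by rw [hCn n]; exact convex_distle _ _
  have FQn : ∀ w ∈ F, ∀ n, w ∈ Qn n := by
    intro w hw n
    induction n with
    | zero => rw [hQn 0]; show 0 ≤ ⟪x 0 - x 0, x 0 - w⟫; simp
    | succ n ih =>
      rw [hQn (n+1)]
      have hvar := (hx n).inner_le ((CnConv n).inter (QnConv n)) w ⟨FCn w hw n, ih⟩
      show 0 ≤ ⟪x 0 - x (n+1), x (n+1) - w⟫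
      rw [show x (n+1) - w = -(w - x (n+1)) by abel, inner_neg_right]
      linarith
  have hxQ : ∀ n, x (n+1) ∈ Qn n := fun n => (hx n).1.2
  have hxC : ∀ n, x (n+1) ∈ Cn n := fun n => (hx n).1.1
  set r : ℕ → ℝ := fun n => ‖x n - x 0‖ with hrdef
  set P : ℝ := ‖p - x 0‖ with hPdef
  have hP0 : 0 ≤ P := norm_nonneg _
  have qk : ∀ n, ∀ v ∈ Qn n, ‖v - x n‖^2 + r n^2 ≤ ‖v - x 0‖^2 := by
    intro n v hv
    rw [hQn n] at hv
    exact qkey hv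
  have rmono : Monotone r := by
    apply monotone_nat_of_le_succ
    intro n
    have h1 := qk n (x (n+1)) (hxQ n)
    apply norm_le_of_sq_le'
    nlinarith [sq_nonneg ‖x (n+1) - x n‖]
  have rle : ∀ n, r n ≤ P := by
    intro n
    cases n with
    | zero => simp [hrdef, hP0]
    | succ n => exact (hx n).2 p ⟨FCn p hpF n, FQn p hpF n⟩
  have hbdd : BddAbove (Set.range r) := ⟨P, by rintro _ ⟨n, rfl⟩; exact rle n⟩
  set rr : ℝ := ⨆ n, r n with hrrdef
  have hrtend : Tendsto r atTop (𝓝 rr) := tendsto_atTop_ciSup rmono hbdd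
  have rler : ∀ n, r n ≤ rr := fun n => le_ciSup hbdd n
  have rrP : rr ≤ P := ciSup_le rle
  have rr0 : 0 ≤ rr := le_trans (by simp [hrdef]) (rler 0)
  have hr2 : Tendsto (fun n => r (n+1)^2 - r n^2) atTop (𝓝 0) := by
    have h1 : Tendsto (fun n => r (n+1)) atTop (𝓝 rr) := hrtend.comp (tendsto_add_atTop_nat 1)
    have h2 := (h1.mul h1).sub (hrtend.mul hrtend)
    rw [sub_self] at h2
    simpa [pow_two] using h2
  have dxx : Tendsto (fun n => ‖x (n+1) - x n‖) atTop (𝓝 0) := by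
    apply tendsto_zero_of_sq_le (fun n => norm_nonneg _) (fun n => ?_) hr2
    have := qk n (x (n+1)) (hxQ n)
    linarith
  have ybar_x : Tendsto (fun n => ‖y n (inn n) - x n‖) atTop (𝓝 0) := by
    apply squeeze_zero (fun n => norm_nonneg _) (fun n => ?_)
      (by simpa using dxx.const_mul 2)
    have h1 : x (n+1) ∈ {v | ‖v - y n (inn n)‖ ≤ ‖v - x n‖} := by
      rw [← hCn n]; exact hxC n
    have h2 : ‖x (n+1) - y n (inn n)‖ ≤ ‖x (n+1) - x n‖ := h1
    calc ‖y n (inn n) - x n‖ ≤ ‖y n (inn n) - x (n+1)‖ + ‖x (n+1) - x n‖ :=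
        norm_sub_le_norm_sub_add_norm_sub _ _ _
      _ ≤ 2 * ‖x (n+1) - x n‖ := by rw [norm_sub_rev]; linarith
  have yx : ∀ i, Tendsto (fun n => ‖y n i - x n‖) atTop (𝓝 0) := fun i =>
    squeeze_zero (fun n => norm_nonneg _) (fun n => hin n i) ybar_x
  -- distances to p
  have hxp2P : ∀ n, ‖x n - p‖ ≤ 2*P := by
    intro n
    calc ‖x n - p‖ ≤ ‖x n - x 0‖ + ‖x 0 - p‖ := norm_sub_le_norm_sub_add_norm_sub _ _ _
      _ ≤ 2*P := by
          rw [norm_sub_rev (x 0) p]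
          have h2 : ‖x n - x 0‖ ≤ P := rle n
          linarith
  have hup : ∀ n, ‖uu n (kn n) - p‖ ≤ ‖z n - p‖ := fun n => chain2 p hpF n (kn n)
  have hzp : ∀ n, ‖z n - p‖ ≤ ‖x n - p‖ := fun n => chain1 p hpF n
  set Dxz : ℕ → ℝ := fun n => ‖x n - p‖^2 - ‖z n - p‖^2 with hDxzdef
  set Dzu : ℕ → ℝ := fun n => ‖z n - p‖^2 - ‖uu n (kn n) - p‖^2 with hDzudef
  have hDbig : ∀ n, Dxz n + Dzu n ≤ 4*P * ‖y n (inn n) - x n‖ := by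
    intro n
    have h1 : ‖y n (inn n) - p‖ ≤ ‖uu n (kn n) - p‖ := chain3 p hpF n (inn n)
    have h2 : ‖x n - p‖ - ‖y n (inn n) - p‖ ≤ ‖x n - y n (inn n)‖ := by
      have := norm_sub_norm_le (x n - p) (y n (inn n) - p)
      rw [show x n - p - (y n (inn n) - p) = x n - y n (inn n) by abel] at this
      exact this
    have h3 : ‖x n - y n (inn n)‖ = ‖y n (inn n) - x n‖ := norm_sub_rev _ _
    have h4 : ‖y n (inn n) - p‖ ≤ ‖x n - p‖ :=
      le_trans h1 (le_trans (hup n) (hzp n))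
    have h5 := hxp2P n
    have h6 := norm_nonneg (y n (inn n) - p)
    simp only [hDxzdef, hDzudef]
    nlinarith
  have hDxz0 : ∀ n, 0 ≤ Dxz n := by
    intro n
    have := hzp n
    have h0 := norm_nonneg (z n - p)
    simp only [hDxzdef]
    nlinarith
  have hDzu0 : ∀ n, 0 ≤ Dzu n := by
    intro n
    have := hup n
    have h0 := norm_nonneg (uu n (kn n) - p)
    simp only [hDzudef]
    nlinarith
  have hDxzt : Tendsto Dxz atTop (𝓝 0) := by
    apply squeeze_zero hDxz0 (fun n => ?_) (by simpa using ybar_x.const_mul (4*P))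
    have := hDbig n
    have := hDzu0 n
    linarith
  have hDzut : Tendsto Dzu atTop (𝓝 0) := by
    apply squeeze_zero hDzu0 (fun n => ?_) (by simpa using ybar_x.const_mul (4*P))
    have := hDbig n
    have := hDxz0 n
    linarith
  -- x - z → 0
  have xz : Tendsto (fun n => ‖x n - z n‖) atTop (𝓝 0) := by
    apply tendsto_zero_of_sq_le (fun n => norm_nonneg _) (fun n => ?_) hDxzt
    have h1 := proj_firm' hCcv (hz n) (wprojC p hpF)
    rw [show (x n - p) - (z n - p) = x n - z n by abel] at h1
    simp only [hDxzdef]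
    linarith
  -- the A-displacement → 0
  have hAz2 : ∀ n, lam*(2*α - lam) * ‖A (kn n) (z n) - A (kn n) p‖^2 ≤ Dzu n := by
    intro n
    have h1 : ‖uu n (kn n) - p‖ ≤
        ‖(z n - lam • A (kn n) (z n)) - (p - lam • A (kn n) p)‖ :=
      proj_nonexp hCcv (hu n (kn n)) (wprojA p hpF (kn n))
    have h2 := ismkey (kn n) (z n) (zC n) p ((Fmem p).mp hpF).1
    have h3 := pow_le_pow_left₀ (norm_nonneg _) h1 2
    simp only [hDzudef]
    linarith
  have Az : Tendsto (fun n => ‖A (kn n) (z n) - A (kn n) p‖) atTop (𝓝 0) := by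
    have hc := hDzut.const_mul ((lam*(2*α - lam))⁻¹)
    rw [mul_zero] at hc
    apply tendsto_zero_of_sq_le (fun n => norm_nonneg _) (fun n => ?_) hc
    rw [inv_mul_eq_div, le_div_iff₀ hκ]
    have h5 := hAz2 n
    simp only [hDzudef] at h5
    nlinarith [h5]
  -- z - ubar → 0
  have zu : Tendsto (fun n => ‖z n - uu n (kn n)‖) atTop (𝓝 0) := by
    have hc := hDzut.const_mul (2 + 2*lam^2/(lam*(2*α - lam)))
    rw [mul_zero] at hc
    apply tendsto_zero_of_sq_le (fun n => norm_nonneg _) (fun n => ?_) hc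
    have hfirm := proj_firm' hCcv (hu n (kn n)) (wprojA p hpF (kn n))
    have h2 := ismkey (kn n) (z n) (zC n) p ((Fmem p).mp hpF).1
    exact zu_bound hlam0 hlam2 hfirm h2
  -- x - ubar → 0
  have xu : Tendsto (fun n => ‖x n - uu n (kn n)‖) atTop (𝓝 0) := by
    apply squeeze_zero (fun n => norm_nonneg _) (fun n => ?_) (by simpa using xz.add zu)
    exact norm_sub_le_norm_sub_add_norm_sub _ _ _
  -- S-displacement → 0
  obtain ⟨b, hb1, hb2⟩ : ∃ b, Filter.limsup a atTop < b ∧ b < 1 :=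
    ⟨(Filter.limsup a atTop + 1)/2, by linarith, by linarith⟩
  have hband : Filter.IsBoundedUnder (· ≤ ·) atTop a :=
    Filter.isBoundedUnder_of ⟨1, fun n => (ha n).2⟩
  have haev : ∀ᶠ n in atTop, a n < b := eventually_lt_of_limsup_lt hb1 hband
  have uSu : ∀ i, Tendsto (fun n => ‖uu n (kn n) - S i (uu n (kn n))‖) atTop (𝓝 0) := by
    intro i
    have hc := ((yx i).add xu).const_mul (1-b)⁻¹
    rw [add_zero, mul_zero] at hc
    apply squeeze_zero' (Filter.Eventually.of_forall fun n => norm_nonneg _) ?_ hc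
    filter_upwards [haev] with n hab
    have e : y n i - uu n (kn n) = (1 - a n) • (S i (uu n (kn n)) - uu n (kn n)) := by
      rw [hy n i]; module
    have e2 : ‖y n i - uu n (kn n)‖ = (1 - a n) * ‖S i (uu n (kn n)) - uu n (kn n)‖ := by
      rw [e, norm_smul, Real.norm_eq_abs,
        abs_of_nonneg (by linarith [(ha n).2] : (0:ℝ) ≤ 1 - a n)]
    have e3 : ‖y n i - uu n (kn n)‖ ≤ ‖y n i - x n‖ + ‖x n - uu n (kn n)‖ :=
      norm_sub_le_norm_sub_add_norm_sub _ _ _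
    have hb0 : (0:ℝ) < 1 - b := by linarith
    rw [norm_sub_rev (uu n (kn n)), inv_mul_eq_div, le_div_iff₀ hb0]
    have e4 : (1 - b) * ‖S i (uu n (kn n)) - uu n (kn n)‖
        ≤ (1 - a n) * ‖S i (uu n (kn n)) - uu n (kn n)‖ :=
      mul_le_mul_of_nonneg_right (by linarith) (norm_nonneg _)
    linarith
  -- per-k displacement → 0
  have ukx : ∀ k, Tendsto (fun n => ‖uu n k - uu n (kn n)‖) atTop (𝓝 0) := by
    intro k
    have hc := xu.const_mul 2
    rw [mul_zero] at hc
    apply squeeze_zero (fun n => norm_nonneg _) (fun n => ?_) hc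
    have t1 : ‖uu n k - uu n (kn n)‖ ≤ ‖uu n k - x n‖ + ‖x n - uu n (kn n)‖ :=
      norm_sub_le_norm_sub_add_norm_sub _ _ _
    have t2 := hkn n k
    have t3 : ‖uu n (kn n) - x n‖ = ‖x n - uu n (kn n)‖ := norm_sub_rev _ _
    linarith
  -- the maps T_k
  have hTex : ∀ (k : Fin M) (v : H), ∃ q, IsMetricProj C (v - lam • A k v) q :=
    fun k v => proj_exists hCne hCcl hCcv _
  choose T hT using hTex
  have Tnonexp : ∀ k, ∀ v ∈ C, ∀ v' ∈ C, ‖T k v - T k v'‖ ≤ ‖v - v'‖ := by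
    intro k v hv v' hv'
    exact le_trans (proj_nonexp hCcv (hT k v) (hT k v')) (ismne k v hv v' hv')
  have uTu : ∀ k, Tendsto (fun n => ‖uu n (kn n) - T k (uu n (kn n))‖) atTop (𝓝 0) := by
    intro k
    have hc := ((ukx k).add zu)
    rw [add_zero] at hc
    apply squeeze_zero (fun n => norm_nonneg _) (fun n => ?_) hc
    have t1 : ‖uu n (kn n) - T k (uu n (kn n))‖
        ≤ ‖uu n (kn n) - uu n k‖ + ‖uu n k - T k (uu n (kn n))‖ :=
      norm_sub_le_norm_sub_add_norm_sub _ _ _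
    have t2 : ‖uu n k - T k (uu n (kn n))‖
        ≤ ‖(z n - lam • A k (z n)) - (uu n (kn n) - lam • A k (uu n (kn n)))‖ :=
      proj_nonexp hCcv (hu n k) (hT k (uu n (kn n)))
    have t3 := ismne k (z n) (zC n) (uu n (kn n)) (uC n (kn n))
    have t4 : ‖uu n (kn n) - uu n k‖ = ‖uu n k - uu n (kn n)‖ := norm_sub_rev _ _
    linarith
  -- boundedness of ubar
  have hBu : ∀ n, ‖uu n (kn n)‖ ≤ 2*P + ‖p‖ := by
    intro n
    have h1 : ‖uu n (kn n) - p‖ ≤ ‖x n - p‖ := le_trans (hup n) (hzp n)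
    have h2 := hxp2P n
    have h3 := norm_add_le (uu n (kn n) - p) p
    rw [sub_add_cancel] at h3
    linarith
  -- the limit object
  obtain ⟨F', w, A0, hle, hinner, hψ⟩ :=
    ultra_weak_limit (fun n => uu n (kn n)) (2*P + ‖p‖) hBu
  have wC : w ∈ C := mem_of_ultra C hCne hCcl hCcv _ (fun n => uC n (kn n)) F' w hinner
  have hubw : ∀ n, ‖uu n (kn n) - w‖ ≤ (2*P + ‖p‖) + ‖w‖ := fun n =>
    le_trans (norm_sub_le _ _) (by linarith [hBu n])
  have hSw : ∀ i, S i w = w := fun i =>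
    fixed_of_ultra C _ (fun n => uC n (kn n)) F' hle w A0 hψ wC _ hubw
      (S i) (hSmap i) (hS i) (uSu i)
  have hTw : ∀ k, T k w = w := fun k =>
    fixed_of_ultra C _ (fun n => uC n (kn n)) F' hle w A0 hψ wC _ hubw
      (T k) (fun v _ => (hT k v).1) (Tnonexp k) (uTu k)
  have wF : w ∈ F := by
    refine (Fmem w).mpr ⟨wC, hSw, ?_⟩
    intro k q hq
    have hproj := hT k w
    rw [hTw k] at hproj
    have hvar := hproj.inner_le hCcv q hq
    rw [show w - lam • A k w - w = -(lam • A k w) by abel, inner_neg_left,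
      real_inner_smul_left] at hvar
    nlinarith
  -- ‖w - x 0‖ ≤ rr
  have hwx0 : ‖w - x 0‖ ≤ rr := by
    apply normbound_of_ultra _ F' hle w (x 0) hinner rr rr0
    intro ε hε
    filter_upwards [xu.eventually_lt_const hε] with n hn
    have t1 : ‖uu n (kn n) - x 0‖ ≤ ‖uu n (kn n) - x n‖ + ‖x n - x 0‖ :=
      norm_sub_le_norm_sub_add_norm_sub _ _ _
    have t2 : ‖uu n (kn n) - x n‖ = ‖x n - uu n (kn n)‖ := norm_sub_rev _ _
    have t4 : ‖x n - x 0‖ ≤ rr := rler n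
    linarith
  -- conclusion
  have hPrr : P ≤ rr := le_trans (hp.2 w wF) hwx0
  have hrreq : rr = P := le_antisymm rrP hPrr
  have hxp2 : ∀ n, ‖x n - p‖^2 ≤ P^2 - r n^2 := by
    intro n
    have hq := qk n p (FQn p hpF n)
    have e : ‖p - x n‖ = ‖x n - p‖ := norm_sub_rev _ _
    rw [e, ← hPdef] at hq
    linarith
  have hfinal : Tendsto (fun n => ‖x n - p‖) atTop (𝓝 0) := by
    apply tendsto_zero_of_sq_le (fun n => norm_nonneg _) hxp2
    have h1 : Tendsto (fun n => P^2 - r n^2) atTop (𝓝 (P^2 - rr^2)) :=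
      tendsto_const_nhds.sub (by simpa [pow_two] using hrtend.mul hrtend)
    rw [hrreq] at h1
    simpa using h1
  rw [tendsto_iff_norm_sub_tendsto_zero]
  exact hfinal
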